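/- Let u and v be set compositions of disjoint finite nonempty sets of positive integers. Then in the left quasi-shuffle set u ⧢̃ v, the number of elements with an even number of letters equals the number of elements with an odd number of letters. -/

import Mathlib

open Finset

/-- `[n] = {1, …, n}` as a finset of naturals. -/
def seg (n : ℕ) : Finset ℕ := Finset.Icc 1 n

/-- A (raw) collection of blocks. -/
abbrev Blocks := Finset (Finset ℕ)

/-- The ground set (union of the blocks). -/
def ground (A : Blocks) : Finset ℕ := A.sup id

/-- `A` is a set partition of the finite set `X`: nonempty pairwise disjoint blocks with union `X`. -/
def IsPartitionOf (A : Blocks) (X : Finset ℕ) : Prop :=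
  (∀ B ∈ A, B.Nonempty) ∧ (A : Set (Finset ℕ)).PairwiseDisjoint id ∧ ground A = X

/-- `A` is a set partition of `[n]`. -/
def IsSP (A : Blocks) (n : ℕ) : Prop := IsPartitionOf A (seg n)

/-- The unique increasing bijection from `X` onto `[#X]`. -/
def stdFun (X : Finset ℕ) (x : ℕ) : ℕ := (X.filter (· < x)).card + 1

/-- Standardization of a collection of blocks. -/
def stdP (A : Blocks) : Blocks := A.image fun B => B.image (stdFun (ground A))

/-- Shift all entries of all blocks up by `k`. -/
def shiftP (A : Blocks) (k : ℕ) : Blocks := A.image fun B => B.image (· + k)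

/-- Concatenation `A | B` of set partitions: shift `B` up by the weight of `A`. -/
def concatP (A B : Blocks) : Blocks := A ∪ shiftP B (ground A).card

/-- The `i`-th block of `A` (1-based), where blocks are ordered by increasing minima. -/
def blockAt (A : Blocks) (i : ℕ) : Finset ℕ :=
  (A.filter fun B => (A.filter fun C => C.min ≤ B.min).card = i).sup id

/-- `A_J` : the subcollection of blocks of `A` indexed by `J`. -/
def subColl (A : Blocks) (J : Finset ℕ) : Blocks := J.image (blockAt A)

/-- `A` is an atomic set partition of `[n]`. -/
def IsAtomicSP (A : Blocks) (n : ℕ) : Prop :=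
  IsSP A n ∧ 1 ≤ n ∧
    ¬ ∃ m B C, 0 < m ∧ m < n ∧ IsSP B m ∧ IsSP C (n - m) ∧ A = concatP B C

/-- Raw set compositions: words whose letters are finsets of naturals. -/
abbrev SComp := List (Finset ℕ)

/-- The union of the letters of a word. -/
def sunion (γ : SComp) : Finset ℕ := γ.foldr (· ∪ ·) ∅

/-- `γ` is a set composition of `K`. -/
def IsSCompOf (γ : SComp) (K : Finset ℕ) : Prop :=
  (∀ B ∈ γ, B.Nonempty) ∧ γ.Pairwise Disjoint ∧ sunion γ = K

/-- `γ[A] = std(A_{γ₁}) | std(A_{γ₂}) | ⋯ | std(A_{γₛ})`. -/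
def applyComp (γ : SComp) (A : Blocks) : Blocks :=
  (γ.map fun g => stdP (subColl A g)).foldr concatP ∅

abbrev NCSym := Blocks →₀ ℚ

/-- The basis element of `NCSym` indexed by a set partition. -/
noncomputable def bas (A : Blocks) : NCSym := Finsupp.single A 1

/-- `p(A) = ∑_{γ ∈ Γ'(r)} (-1)^{ℓ(γ)-1} γ[A]`. -/
noncomputable def pNC (A : Blocks) (r : ℕ) : NCSym :=
  ∑ᶠ γ ∈ {γ : SComp | IsSCompOf γ (seg r) ∧ 1 ∈ γ.headI},
    ((-1 : ℚ) ^ (γ.length - 1)) • bas (applyComp γ A)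

open TensorProduct in
/-- `Δ(A) = ∑_{K ⊔ L = [r]} std(A_K) ⊗ std(A_L)` on a basis element. -/
noncomputable def deltaB (A : Blocks) : NCSym ⊗[ℚ] NCSym :=
  ∑ K ∈ (seg A.card).powerset,
    bas (stdP (subColl A K)) ⊗ₜ[ℚ] bas (stdP (subColl A (seg A.card \ K)))

/-- The coproduct of `NCSym`, extended linearly. -/
noncomputable def Delta : NCSym →ₗ[ℚ] TensorProduct ℚ NCSym NCSym :=
  Finsupp.lsum ℚ fun A => LinearMap.toSpanSingleton ℚ _ (deltaB A)
/-- The quasi-shuffle of two (disjoint) words. -/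
def qshuffle : SComp → SComp → Finset SComp
  | u, [] => {u}
  | [], v => {v}
  | a :: u', b :: v' =>
      ((qshuffle u' (b :: v')).image (a :: ·)) ∪
      ((qshuffle u' v').image ((a ∪ b) :: ·)) ∪
      ((qshuffle (a :: u') v').image (b :: ·))
  termination_by u v => u.length + v.length
  decreasing_by all_goals simp +arith +decide

/-- The left quasi-shuffle of two nonempty (disjoint) words; junk value `∅` on empty words. -/
def lqshuffle : SComp → SComp → Finset SComp
  | [], _ => ∅
  | _, [] => ∅
  | a :: u', b :: v' =>
      ((qshuffle u' (b :: v')).image (a :: ·)) ∪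
      ((qshuffle u' v').image ((a ∪ b) :: ·))

lemma sum_image_cons (a : Finset ℕ) (S : Finset SComp) :
    ∑ w ∈ S.image (a :: ·), (-1:ℤ)^w.length = -∑ w ∈ S, (-1:ℤ)^w.length := by
  rw [Finset.sum_image (fun x _ y _ h => by injection h)]
  simp [pow_succ, ← Finset.sum_mul]

lemma disj_image_cons {a b : Finset ℕ} (hab : a ≠ b) (S T : Finset SComp) :
    Disjoint (S.image (a :: ·)) (T.image (b :: ·)) := by
  rw [Finset.disjoint_left]
  rintro x hx hy
  obtain ⟨w, -, rfl⟩ := Finset.mem_image.1 hx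
  obtain ⟨w', -, h⟩ := Finset.mem_image.1 hy
  exact hab (by injection h.symm)

lemma ne_union_of_disj {a b : Finset ℕ} (hb : b.Nonempty) (hab : Disjoint a b) :
    a ≠ a ∪ b := fun h => hb.ne_empty (Finset.eq_empty_iff_forall_notMem.2 fun x hx =>
      Finset.disjoint_right.1 hab hx (h ▸ Finset.mem_union_right a hx))

lemma qshuffle_sign (u v : SComp)
    (hu : ∀ B ∈ u, B.Nonempty) (hv : ∀ B ∈ v, B.Nonempty)
    (hd : ∀ B ∈ u, ∀ C ∈ v, Disjoint B C) :
    ∑ w ∈ qshuffle u v, (-1:ℤ)^w.length = (-1)^(u.length + v.length) := by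
  induction u, v using qshuffle.induct with
  | case1 u => simp [qshuffle]
  | case2 b v' => simp [qshuffle]
  | case3 a u' b v' ih1 ih2 ih3 =>
    have ha : a.Nonempty := hu a (by simp)
    have hb : b.Nonempty := hv b (by simp)
    have hab : Disjoint a b := hd a (by simp) b (by simp)
    have h1 : a ≠ a ∪ b := ne_union_of_disj hb hab
    have h2 : b ≠ a ∪ b := by
      rw [Finset.union_comm]; exact ne_union_of_disj ha hab.symm
    have h3 : a ≠ b := fun h => ha.ne_empty (Finset.eq_empty_iff_forall_notMem.2
      fun x hx => Finset.disjoint_left.1 hab hx (h ▸ hx))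
    have hu' : ∀ B ∈ u', B.Nonempty := fun B hB => hu B (by simp [hB])
    have hv' : ∀ B ∈ v', B.Nonempty := fun B hB => hv B (by simp [hB])
    have hd1 : ∀ B ∈ u', ∀ C ∈ b :: v', Disjoint B C := fun B hB C hC =>
      hd B (by simp [hB]) C hC
    have hd2 : ∀ B ∈ u', ∀ C ∈ v', Disjoint B C := fun B hB C hC =>
      hd B (by simp [hB]) C (by simp [hC])
    have hd3 : ∀ B ∈ a :: u', ∀ C ∈ v', Disjoint B C := fun B hB C hC =>
      hd B hB C (by simp [hC])
    rw [qshuffle,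
      Finset.sum_union (Finset.disjoint_union_left.2
        ⟨disj_image_cons h3 _ _, disj_image_cons h2.symm _ _⟩),
      Finset.sum_union (disj_image_cons h1 _ _), sum_image_cons, sum_image_cons,
      sum_image_cons, ih1 hu' hv hd1, ih2 hu' hv' hd2, ih3 hu hv' hd3]
    simp only [List.length_cons]
    ring

lemma subset_sunion {γ : SComp} {B : Finset ℕ} (hB : B ∈ γ) : B ⊆ sunion γ := by
  induction γ with
  | nil => simp at hB
  | cons a γ ih =>
    rcases List.mem_cons.1 hB with rfl | h
    · exact Finset.subset_union_left
    · exact (ih h).trans Finset.subset_union_right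

lemma lqshuffle_sign (u v : SComp) (hune : u ≠ []) (hvne : v ≠ [])
    (hu : ∀ B ∈ u, B.Nonempty) (hv : ∀ B ∈ v, B.Nonempty)
    (hd : ∀ B ∈ u, ∀ C ∈ v, Disjoint B C) :
    ∑ w ∈ lqshuffle u v, (-1:ℤ)^w.length = 0 := by
  obtain ⟨a, u', rfl⟩ := List.exists_cons_of_ne_nil hune
  obtain ⟨b, v', rfl⟩ := List.exists_cons_of_ne_nil hvne
  have hb : b.Nonempty := hv b (by simp)
  have hab : Disjoint a b := hd a (by simp) b (by simp)
  have h1 : a ≠ a ∪ b := ne_union_of_disj hb hab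
  have hu' : ∀ B ∈ u', B.Nonempty := fun B hB => hu B (by simp [hB])
  have hv' : ∀ B ∈ v', B.Nonempty := fun B hB => hv B (by simp [hB])
  have hd1 : ∀ B ∈ u', ∀ C ∈ b :: v', Disjoint B C := fun B hB C hC =>
    hd B (by simp [hB]) C hC
  have hd2 : ∀ B ∈ u', ∀ C ∈ v', Disjoint B C := fun B hB C hC =>
    hd B (by simp [hB]) C (by simp [hC])
  rw [lqshuffle, Finset.sum_union (disj_image_cons h1 _ _), sum_image_cons, sum_image_cons,
    qshuffle_sign u' (b :: v') hu' hv hd1, qshuffle_sign u' v' hu' hv' hd2]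
  simp only [List.length_cons]
  ring


/-- For set compositions `u`, `v` of disjoint finite nonempty sets, the left
quasi-shuffle set `u ⧢̃ v` has as many elements with an even number of letters as elements
with an odd number of letters. -/
theorem lqshuffle_even_card_eq_odd_card (K L : Finset ℕ) (hK : K.Nonempty) (hL : L.Nonempty)
    (hdisj : Disjoint K L) (u v : SComp) (hu : IsSCompOf u K) (hv : IsSCompOf v L) :
    ((lqshuffle u v).filter fun w => Even w.length).card
      = ((lqshuffle u v).filter fun w => Odd w.length).card := by
  have hune : u ≠ [] := by rintro rfl; exact hK.ne_empty (hu.2.2.symm.trans rfl)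
  have hvne : v ≠ [] := by rintro rfl; exact hL.ne_empty (hv.2.2.symm.trans rfl)
  have hd : ∀ B ∈ u, ∀ C ∈ v, Disjoint B C := fun B hB C hC =>
    hdisj.mono (hu.2.2 ▸ subset_sunion hB) (hv.2.2 ▸ subset_sunion hC)
  have key := lqshuffle_sign u v hune hvne hu.1 hv.1 hd
  set S := lqshuffle u v
  have hsplit := Finset.sum_filter_add_sum_filter_not S (fun w => Even w.length)
    (fun w => (-1:ℤ)^w.length)
  have he : ∑ w ∈ S.filter (fun w => Even w.length), (-1:ℤ)^w.length
      = (S.filter fun w => Even w.length).card := by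
    rw [Finset.sum_congr rfl fun w hw => ?_, Finset.sum_const, nsmul_eq_mul, mul_one]
    exact (Finset.mem_filter.1 hw).2.neg_one_pow
  have ho : ∑ w ∈ S.filter (fun w => ¬ Even w.length), (-1:ℤ)^w.length
      = -(S.filter fun w => Odd w.length).card := by
    simp only [Nat.not_even_iff_odd]
    rw [Finset.sum_congr rfl fun w hw => (Finset.mem_filter.1 hw).2.neg_one_pow,
      Finset.sum_const, nsmul_eq_mul, mul_neg_one]
  rw [key, he, ho] at hsplit
  omega
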